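/- One-step multigrid recursion bound: let V be a finite-dimensional real inner product space with inner product a(·,·), W a subspace with a-orthogonal projection P, S a symmetric positive semidefinite operator on V with a(Sv,v) ≤ δ·a(v,v) for 0 < δ < 1, m a positive integer, and E' a symmetric positive semidefinite operator on W with a(E'w,w) ≤ γ'·a(w,w) for all w ∈ W, where γ' ≤ γ := 1/(1 + 2m(1−δ)). Define E = S^m(I − (I − E')P)S^m on V. Then a(Ev,v) ≤ γ·a(v,v) for all v ∈ V. -/

import Mathlib

open RealInnerProductSpace

theorem stmt_5 {V : Type*} [NormedAddCommGroup V] [InnerProductSpace ℝ V]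
    [FiniteDimensional ℝ V] (W : Submodule ℝ V)
    (P : V →ₗ[ℝ] V)
    (hPmem : ∀ v : V, P v ∈ W)
    (hPorth : ∀ v : V, ∀ u ∈ W, ⟪v - P v, u⟫ = 0)
    (S : V →ₗ[ℝ] V)
    (hsym : ∀ v w : V, ⟪S v, w⟫ = ⟪v, S w⟫)
    (hpsd : ∀ v : V, 0 ≤ ⟪S v, v⟫)
    (δ : ℝ) (hδ0 : 0 < δ) (hδ1 : δ < 1)
    (hS : ∀ v : V, ⟪S v, v⟫ ≤ δ * ⟪v, v⟫)
    (m : ℕ) (hm : 1 ≤ m)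
    (E' : V →ₗ[ℝ] V)
    (hE'mem : ∀ w ∈ W, E' w ∈ W)
    (hE'sym : ∀ w ∈ W, ∀ w' ∈ W, ⟪E' w, w'⟫ = ⟪w, E' w'⟫)
    (hE'psd : ∀ w ∈ W, 0 ≤ ⟪E' w, w⟫)
    (γ' : ℝ)
    (hE'bnd : ∀ w ∈ W, ⟪E' w, w⟫ ≤ γ' * ⟪w, w⟫)
    (γ : ℝ) (hγ : γ = 1 / (1 + 2 * (m : ℝ) * (1 - δ)))
    (hγ'γ : γ' ≤ γ)
    (E : V →ₗ[ℝ] V)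
    (hE : E = S ^ m * (1 - (1 - E') * P) * S ^ m)
    (v : V) :
    ⟪E v, v⟫ ≤ γ * ⟪v, v⟫ := by
  have hm0 : (0:ℝ) < 1 + 2 * (m : ℝ) * (1 - δ) := by
    have : (0:ℝ) ≤ (m:ℝ) := Nat.cast_nonneg m
    nlinarith
  -- symmetry of powers of S
  have hsymPow : ∀ (n : ℕ) (x y : V), ⟪(S ^ n) x, y⟫ = ⟪x, (S ^ n) y⟫ := by
    intro n
    induction n with
    | zero => intro x y; simp
    | succ k ih =>
      intro x y
      have e1 : (S ^ (k + 1)) x = (S ^ k) (S x) := by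
        rw [pow_succ, Module.End.mul_apply]
      have e2 : (S ^ (k + 1)) y = S ((S ^ k) y) := by
        rw [pow_succ', Module.End.mul_apply]
      rw [e1, e2, ih, hsym]
  -- Cauchy-Schwarz for the psd form (x,y) ↦ ⟪S x, y⟫
  have hCS : ∀ x y : V, ⟪S x, y⟫ ^ 2 ≤ ⟪S x, x⟫ * ⟪S y, y⟫ := by
    intro x y
    have hdis : discrim ⟪S y, y⟫ (2 * ⟪S x, y⟫) ⟪S x, x⟫ ≤ 0 := by
      apply discrim_le_zero
      intro t
      have h1 : ⟪S y, x⟫ = ⟪S x, y⟫ := by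
        rw [hsym, real_inner_comm]
      have hexp : ⟪S (x + t • y), x + t • y⟫
          = ⟪S y, y⟫ * t ^ 2 + 2 * ⟪S x, y⟫ * t + ⟪S x, x⟫ := by
        simp only [map_add, map_smul, inner_add_left, inner_add_right,
          real_inner_smul_left, real_inner_smul_right, h1]
        ring
      have h := hpsd (x + t • y)
      rw [hexp] at h
      nlinarith [h]
    rw [discrim] at hdis
    nlinarith [hdis]
  -- contraction: ⟪S x, S x⟫ ≤ δ^2 ⟪x, x⟫
  have hstep : ∀ x : V, ⟪S x, S x⟫ ≤ δ ^ 2 * ⟪x, x⟫ := by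
    intro x
    have hA : (0:ℝ) ≤ ⟪S x, S x⟫ := real_inner_self_nonneg
    rcases eq_or_lt_of_le hA with h0 | h0
    · rw [← h0]
      exact mul_nonneg (by positivity) real_inner_self_nonneg
    · have hcs := hCS x (S x)
      have h1 : ⟪S x, x⟫ ≤ δ * ⟪x, x⟫ := hS x
      have h2 : ⟪S (S x), S x⟫ ≤ δ * ⟪S x, S x⟫ := hS (S x)
      have h3 : (0:ℝ) ≤ ⟪S x, x⟫ := hpsd x
      have h4 : (0:ℝ) ≤ ⟪S (S x), S x⟫ := hpsd (S x)
      have hxx : (0:ℝ) ≤ ⟪x, x⟫ := real_inner_self_nonneg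
      nlinarith
  -- iterated contraction
  have hpow : ∀ (n : ℕ) (x : V), ⟪(S ^ n) x, (S ^ n) x⟫ ≤ (δ ^ 2) ^ n * ⟪x, x⟫ := by
    intro n
    induction n with
    | zero => intro x; simp
    | succ k ih =>
      intro x
      have h1 : (S ^ (k + 1)) x = (S ^ k) (S x) := by
        rw [pow_succ, Module.End.mul_apply]
      rw [h1]
      calc ⟪(S ^ k) (S x), (S ^ k) (S x)⟫ ≤ (δ ^ 2) ^ k * ⟪S x, S x⟫ := ih (S x)
        _ ≤ (δ ^ 2) ^ k * (δ ^ 2 * ⟪x, x⟫) := by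
            apply mul_le_mul_of_nonneg_left (hstep x) (by positivity)
        _ = (δ ^ 2) ^ (k + 1) * ⟪x, x⟫ := by ring
  -- Bernoulli: (δ^2)^m ≤ γ
  have hbern : (δ ^ 2) ^ m ≤ γ := by
    have ha : (-2:ℝ) ≤ 1 / δ - 1 := by
      have : (0:ℝ) < 1 / δ := by positivity
      linarith
    have hb := one_add_mul_le_pow ha (2 * m)
    have hc : (1 + (1 / δ - 1)) = 1 / δ := by ring
    rw [hc] at hb
    have hd : 1 - δ ≤ 1 / δ - 1 := by
      rw [← sub_nonneg]
      have : 1 / δ - 1 - (1 - δ) = (1 - δ) ^ 2 / δ := by field_simp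
      rw [this]; positivity
    have he : 1 + 2 * (m:ℝ) * (1 - δ) ≤ (1 / δ) ^ (2 * m) := by
      have hmn : (0:ℝ) ≤ (m:ℝ) := Nat.cast_nonneg m
      calc 1 + 2 * (m:ℝ) * (1 - δ) ≤ 1 + (↑(2 * m)) * (1 / δ - 1) := by
            push_cast; nlinarith
        _ ≤ (1 / δ) ^ (2 * m) := hb
    have hf : (δ ^ 2) ^ m = δ ^ (2 * m) := (pow_mul δ 2 m).symm
    have hg : δ ^ (2 * m) * (1 / δ) ^ (2 * m) = 1 := by
      rw [← mul_pow]
      field_simp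
      exact one_pow _
    rw [hγ, hf, le_div_iff₀ hm0]
    calc δ ^ (2 * m) * (1 + 2 * (m:ℝ) * (1 - δ))
        ≤ δ ^ (2 * m) * (1 / δ) ^ (2 * m) :=
          mul_le_mul_of_nonneg_left he (by positivity)
      _ = 1 := hg
  -- γ' ≤ γ ≤ 1
  have hγle1 : γ ≤ 1 := by
    rw [hγ]
    rw [div_le_one hm0]
    have : (0:ℝ) ≤ (m:ℝ) := Nat.cast_nonneg m
    nlinarith
  -- expansion of ⟪E v, v⟫
  set u := (S ^ m) v with hu
  have hEv : E v = (S ^ m) (u - (P u - E' (P u))) := by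
    rw [hE]
    simp only [Module.End.mul_apply, LinearMap.sub_apply, Module.End.one_apply, map_sub]
    rfl
  have hinner : ⟪E v, v⟫ = ⟪u, u⟫ - ⟪P u, P u⟫ + ⟪E' (P u), P u⟫ := by
    rw [hEv, hsymPow]
    have h1 : ⟪u - P u, P u⟫ = 0 := hPorth u (P u) (hPmem u)
    have h2 : ⟪u - P u, E' (P u)⟫ = 0 := hPorth u (E' (P u)) (hE'mem _ (hPmem u))
    have h3 : ⟪P u, u⟫ = ⟪P u, P u⟫ := by
      rw [inner_sub_left] at h1
      have := real_inner_comm u (P u)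
      linarith
    have h4 : ⟪E' (P u), u⟫ = ⟪E' (P u), P u⟫ := by
      rw [inner_sub_left] at h2
      have c1 := real_inner_comm u (E' (P u))
      have c2 := real_inner_comm (P u) (E' (P u))
      linarith
    rw [inner_sub_left, inner_sub_left, h3, h4]
    ring
  have hE'b : ⟪E' (P u), P u⟫ ≤ γ' * ⟪P u, P u⟫ := hE'bnd (P u) (hPmem u)
  have hPu : (0:ℝ) ≤ ⟪P u, P u⟫ := real_inner_self_nonneg
  have huu : ⟪u, u⟫ ≤ (δ ^ 2) ^ m * ⟪v, v⟫ := hpow m v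
  have hvv : (0:ℝ) ≤ ⟪v, v⟫ := real_inner_self_nonneg
  have hfin : ⟪E v, v⟫ ≤ ⟪u, u⟫ := by
    rw [hinner]
    nlinarith
  calc ⟪E v, v⟫ ≤ ⟪u, u⟫ := hfin
    _ ≤ (δ ^ 2) ^ m * ⟪v, v⟫ := huu
    _ ≤ γ * ⟪v, v⟫ := mul_le_mul_of_nonneg_right hbern hvv
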